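/- Let H be a hypergraph with m edges on n vertices, let ε₁, ε₂ ∈ (0,1) with ε₁ < ε₂, and let T = {v ∈ V : deg_H(v) > ε₁·m} be the set of high-degree vertices. If the number of edges contained in T is at most (1−ε₂)·m, then there exists a set S ⊇ T such that (1−ε₂)·m ≤ |H_S| ≤ (1−ε₂+ε₁)·m, where H_S = {H ∈ H : H ⊆ S}. -/
import Mathlib


/-- Balanced-set proposition: if the set T of high-degree vertices induces at most
(1-ε₂)m edges, then there is S ⊇ T with (1-ε₂)m ≤ |H_S| ≤ (1-ε₂+ε₁)m. -/
theorem stmt4 {V : Type*} [Fintype V] [DecidableEq V]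
    (H : Finset (Finset V)) (ε₁ ε₂ : ℝ)
    (h10 : 0 < ε₁) (h11 : ε₁ < 1) (h20 : 0 < ε₂) (h21 : ε₂ < 1) (h12 : ε₁ < ε₂)
    (T : Finset V)
    (hT : T = Finset.univ.filter fun v =>
      ε₁ * (H.card : ℝ) < ((H.filter fun A => v ∈ A).card : ℝ))
    (hHT : ((H.filter fun A => A ⊆ T).card : ℝ) ≤ (1 - ε₂) * H.card) :
    ∃ S : Finset V, T ⊆ S ∧
      (1 - ε₂) * (H.card : ℝ) ≤ ((H.filter fun A => A ⊆ S).card : ℝ) ∧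
      ((H.filter fun A => A ⊆ S).card : ℝ) ≤ (1 - ε₂ + ε₁) * H.card := by
  classical
  set m : ℝ := (H.card : ℝ) with hm
  -- the set of candidate sets
  set P : Finset V → Prop := fun S => T ⊆ S ∧
    (1 - ε₂) * m ≤ ((H.filter fun A => A ⊆ S).card : ℝ) with hP
  have hPuniv : P Finset.univ := by
    constructor
    · exact Finset.subset_univ T
    · have : (H.filter fun A => A ⊆ (Finset.univ : Finset V)) = H := by
        apply Finset.filter_true_of_mem
        intro A _
        exact Finset.subset_univ A
      rw [this]
      have h1 : (0:ℝ) ≤ ε₂ * m := mul_nonneg h20.le (Nat.cast_nonneg _)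
      linarith
  obtain ⟨S, hSmem, hSmin⟩ := Finset.exists_min_image
    ((Finset.univ : Finset (Finset V)).filter P) Finset.card
    ⟨Finset.univ, Finset.mem_filter.mpr ⟨Finset.mem_univ _, hPuniv⟩⟩
  rw [Finset.mem_filter] at hSmem
  obtain ⟨-, hTS, hlow⟩ := hSmem
  refine ⟨S, hTS, hlow, ?_⟩
  by_cases hST : S = T
  · subst hST
    have h1 : (0:ℝ) ≤ ε₁ * m := mul_nonneg h10.le (Nat.cast_nonneg _)
    linarith
  · -- pick v ∈ S \ T
    have hvex : ∃ v, v ∈ S ∧ v ∉ T := by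
      by_contra hc
      push_neg at hc
      exact hST (Finset.Subset.antisymm (fun v hv => hc v hv) hTS)
    obtain ⟨v, hvS, hvT⟩ := hvex
    -- degree of v is small
    have hdeg : ((H.filter fun A => v ∈ A).card : ℝ) ≤ ε₁ * m := by
      rw [hT] at hvT
      simp only [Finset.mem_filter, Finset.mem_univ, true_and, not_lt] at hvT
      exact hvT
    set S' := S.erase v with hS'
    have hTS' : T ⊆ S' := fun x hx =>
      Finset.mem_erase.mpr ⟨fun h => hvT (h ▸ hx), hTS hx⟩
    have hcardlt : S'.card < S.card := Finset.card_erase_lt_of_mem hvS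
    have hnotP : ¬ P S' := by
      intro hPS'
      have := hSmin S' (Finset.mem_filter.mpr ⟨Finset.mem_univ _, hPS'⟩)
      omega
    have hS'low : ((H.filter fun A => A ⊆ S').card : ℝ) < (1 - ε₂) * m := by
      by_contra hc
      push_neg at hc
      exact hnotP ⟨hTS', hc⟩
    -- counting: edges in S = edges in S' plus edges containing v
    have hcount : (H.filter fun A => A ⊆ S).card ≤
        (H.filter fun A => A ⊆ S').card + (H.filter fun A => v ∈ A).card := by
      calc (H.filter fun A => A ⊆ S).card
          ≤ ((H.filter fun A => A ⊆ S') ∪ (H.filter fun A => v ∈ A)).card := by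
            apply Finset.card_le_card
            intro A hA
            rw [Finset.mem_filter] at hA
            obtain ⟨hAH, hAS⟩ := hA
            rw [Finset.mem_union, Finset.mem_filter, Finset.mem_filter]
            by_cases hvA : v ∈ A
            · exact Or.inr ⟨hAH, hvA⟩
            · exact Or.inl ⟨hAH, fun x hx =>
                Finset.mem_erase.mpr ⟨fun h => hvA (h ▸ hx), hAS hx⟩⟩
        _ ≤ _ := Finset.card_union_le _ _
    have hcount' : ((H.filter fun A => A ⊆ S).card : ℝ) ≤
        ((H.filter fun A => A ⊆ S').card : ℝ) + ((H.filter fun A => v ∈ A).card : ℝ) := by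
      exact_mod_cast hcount
    have : (1 - ε₂) * m + ε₁ * m = (1 - ε₂ + ε₁) * m := by ring
    linarith
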